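/- Let A₁, A₂ ⊆ E be nonempty finite sets, let 0 ≤ λ ≤ 1, and let x* ∈ E be a local minimizer of Φ_λ. Then there exists an open neighborhood U of x* such that Φ_λ(x) = Φ_λ(x*) + ‖x − x*‖² for all x ∈ U. In particular, x* is an isolated strict local minimizer of Φ_λ. -/

import Mathlib

open MeasureTheory Metric Filter Topology

/-- The geometric distance potential `Φ_λ(x) = λ d_{A₁}(x)² + (1-λ) d_{A₂}(x)²`. -/
noncomputable def distPotential {d : ℕ} (A₁ A₂ : Set (EuclideanSpace ℝ (Fin d))) (lam : ℝ)
    (x : EuclideanSpace ℝ (Fin d)) : ℝ :=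
  lam * (Metric.infDist x A₁) ^ 2 + (1 - lam) * (Metric.infDist x A₂) ^ 2

section Aux

variable {E : Type*} [NormedAddCommGroup E] [InnerProductSpace ℝ E]

/-- `infDist` to a finite set is a finite min. -/
lemma infDist_finset_eq {α : Type*} [MetricSpace α] (P : Finset α) (hP : P.Nonempty) (x : α) :
    Metric.infDist x ↑P = P.inf' hP (fun a => dist x a) := by
  apply le_antisymm
  · obtain ⟨a, ha, hEq⟩ := P.exists_mem_eq_inf' hP (fun a => dist x a)
    rw [hEq]
    exact Metric.infDist_le_dist_of_mem (by simpa using ha)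
  · obtain ⟨a, ha, hEq⟩ := P.finite_toSet.isCompact.exists_infDist_eq_dist
      (by simpa using hP) x
    rw [hEq]
    exact Finset.inf'_le _ (by simpa using ha)

/-- Monotone maps commute with `Finset.inf'` over ℝ. -/
lemma mono_map_inf' {α : Type*} (P : Finset α) (hP : P.Nonempty) {g : ℝ → ℝ}
    (hg : Monotone g) (f : α → ℝ) : g (P.inf' hP f) = P.inf' hP (fun a => g (f a)) :=
  Finset.apply_inf'_eq_inf'_comp hP (f := f) g (fun _ _ => hg.map_min)

/-- Key local representation of the squared distance to a finite set near a point. -/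
lemma key_rep (A : Set E) (hA : A.Nonempty) (hfin : A.Finite) (x : E) :
    ∃ (P : Finset E) (hP : P.Nonempty) (ε : ℝ), 0 < ε ∧
      (∀ a ∈ P, a ∈ A ∧ dist x a = Metric.infDist x A) ∧
      ∀ v : E, ‖v‖ < ε →
        Metric.infDist (x + v) A ^ 2 =
          Metric.infDist x A ^ 2 + ‖v‖ ^ 2 +
            P.inf' hP (fun a => 2 * (inner ℝ v (x - a) : ℝ)) := by
  classical
  set r := Metric.infDist x A with hr
  have hr0 : 0 ≤ r := Metric.infDist_nonneg
  set A' : Finset E := hfin.toFinset with hA'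
  have hA'ne : A'.Nonempty := by simpa [hA'] using hA
  have hcoe : (↑A' : Set E) = A := hfin.coe_toFinset
  set P : Finset E := A'.filter (fun a => dist x a = r) with hPdef
  have hP : P.Nonempty := by
    obtain ⟨a, haA, ha⟩ := hfin.isCompact.exists_infDist_eq_dist hA x
    exact ⟨a, by simp [hPdef, hA', hfin.mem_toFinset, haA, ha.symm, hr]⟩
  have hPmem : ∀ a ∈ P, a ∈ A ∧ dist x a = r := by
    intro a ha
    rw [hPdef, Finset.mem_filter] at ha
    exact ⟨by rw [← hcoe]; exact_mod_cast ha.1, ha.2⟩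
  -- gap
  set Q : Finset E := A' \ P with hQdef
  set δ : ℝ := if hQ : Q.Nonempty then Q.inf' hQ (fun a => dist x a) - r else 1 with hδ
  have hQgt : ∀ a ∈ Q, r + δ ≤ dist x a := by
    intro a ha
    have hQne : Q.Nonempty := ⟨a, ha⟩
    rw [hδ, dif_pos hQne]
    have := Finset.inf'_le (fun a => dist x a) ha
    linarith
  have hδpos : 0 < δ := by
    rw [hδ]
    split_ifs with hQ
    · obtain ⟨a, ha, hEq⟩ := Q.exists_mem_eq_inf' hQ (fun a => dist x a)
      rw [hEq]
      have haA : a ∈ A := by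
        rw [← hcoe]; exact_mod_cast (Finset.mem_sdiff.mp ha).1
      have h1 : r ≤ dist x a := Metric.infDist_le_dist_of_mem haA
      have h2 : dist x a ≠ r := by
        intro h
        exact (Finset.mem_sdiff.mp ha).2 (by simp [hPdef, (Finset.mem_sdiff.mp ha).1, h])
      cases h1.lt_or_eq with
      | inl h => linarith
      | inr h => exact absurd h.symm h2
    · norm_num
  refine ⟨P, hP, δ / 2, by linarith, hPmem, ?_⟩
  intro v hv
  have hdxv : dist (x + v) x = ‖v‖ := by
    rw [dist_eq_norm]; simp
  -- Step 1: infDist (x+v) A = inf' over P of dist (x+v)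
  have step1 : Metric.infDist (x + v) A = P.inf' hP (fun a => dist (x + v) a) := by
    rw [← hcoe, infDist_finset_eq A' hA'ne (x + v)]
    apply le_antisymm
    · exact Finset.inf'_mono _ (Finset.filter_subset _ _) hP
    · obtain ⟨a, ha, hEq⟩ := A'.exists_mem_eq_inf' hA'ne (fun a => dist (x + v) a)
      rw [hEq]
      by_cases haP : a ∈ P
      · exact Finset.inf'_le _ haP
      · have haQ : a ∈ Q := Finset.mem_sdiff.mpr ⟨ha, haP⟩
        have h1 : r + δ ≤ dist x a := hQgt a haQ
        have h2 : dist x a ≤ dist x (x + v) + dist (x + v) a := dist_triangle _ _ _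
        have h3 : dist x (x + v) = ‖v‖ := by rw [dist_comm]; exact hdxv
        obtain ⟨b, hb⟩ := id hP
        have hbd : dist x b = r := (hPmem b hb).2
        have h4 : P.inf' hP (fun a => dist (x + v) a) ≤ dist (x + v) b := Finset.inf'_le _ hb
        have h5 : dist (x + v) b ≤ dist (x + v) x + dist x b := dist_triangle _ _ _
        linarith [hv]
  -- Step 2: squares
  obtain ⟨a₀, ha₀, hEq₀⟩ := P.exists_mem_eq_inf' hP (fun a => dist (x + v) a)
  have step2 : Metric.infDist (x + v) A ^ 2 = P.inf' hP (fun a => dist (x + v) a ^ 2) := by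
    rw [step1, hEq₀]
    apply le_antisymm
    · apply Finset.le_inf'
      intro b hb
      have : dist (x + v) a₀ ≤ dist (x + v) b := hEq₀ ▸ Finset.inf'_le _ hb
      exact pow_le_pow_left₀ dist_nonneg this 2
    · exact Finset.inf'_le _ ha₀
  -- Step 3: expand each square
  have step3 : ∀ a ∈ P, dist (x + v) a ^ 2 =
      (r ^ 2 + ‖v‖ ^ 2) + 2 * (inner ℝ v (x - a) : ℝ) := by
    intro a ha
    have hda : dist x a = r := (hPmem a ha).2
    have h1 : dist (x + v) a = ‖v + (x - a)‖ := by
      rw [dist_eq_norm]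
      congr 1
      abel
    rw [h1, norm_add_sq_real]
    have h2 : ‖x - a‖ = r := by rw [← dist_eq_norm]; exact hda
    rw [h2]
    ring
  -- Step 4: extract constant
  have step4 : P.inf' hP (fun a => dist (x + v) a ^ 2) =
      (r ^ 2 + ‖v‖ ^ 2) + P.inf' hP (fun a => 2 * (inner ℝ v (x - a) : ℝ)) := by
    rw [Finset.inf'_congr hP rfl (fun a ha => step3 a ha)]
    exact (mono_map_inf' P hP (g := fun t => (r ^ 2 + ‖v‖ ^ 2) + t)
      (fun s t hst => by dsimp; linarith) (fun a => 2 * (inner ℝ v (x - a) : ℝ))).symm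
  rw [step2, step4]

end Aux

theorem local_minimizers_quadratic_rigidity_moe
    (d : ℕ) (hd : 1 ≤ d)
    (A₁ A₂ : Set (EuclideanSpace ℝ (Fin d)))
    (hA₁ : A₁.Nonempty) (hA₂ : A₂.Nonempty)
    (hA₁fin : A₁.Finite) (hA₂fin : A₂.Finite)
    (lam : ℝ) (hlam₀ : 0 ≤ lam) (hlam₁ : lam ≤ 1)
    (xstar : EuclideanSpace ℝ (Fin d))
    (hmin : IsLocalMin (distPotential A₁ A₂ lam) xstar) :
    ∃ U : Set (EuclideanSpace ℝ (Fin d)), IsOpen U ∧ xstar ∈ U ∧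
      (∀ x ∈ U, distPotential A₁ A₂ lam x =
        distPotential A₁ A₂ lam xstar + ‖x - xstar‖ ^ 2) ∧
      (∀ x ∈ U, x ≠ xstar →
        distPotential A₁ A₂ lam xstar < distPotential A₁ A₂ lam x) := by
  classical
  obtain ⟨P₁, hP₁, ε₁, hε₁, hP₁mem, hrep₁⟩ := key_rep A₁ hA₁ hA₁fin xstar
  obtain ⟨P₂, hP₂, ε₂, hε₂, hP₂mem, hrep₂⟩ := key_rep A₂ hA₂ hA₂fin xstar
  obtain ⟨ε₀, hε₀, hball⟩ := Metric.eventually_nhds_iff.mp hmin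
  set ε : ℝ := min ε₀ (min ε₁ ε₂) with hε
  have hεpos : 0 < ε := lt_min hε₀ (lt_min hε₁ hε₂)
  set m : EuclideanSpace ℝ (Fin d) → ℝ := fun v =>
    lam * P₁.inf' hP₁ (fun a => 2 * (inner ℝ v (xstar - a) : ℝ)) +
    (1 - lam) * P₂.inf' hP₂ (fun a => 2 * (inner ℝ v (xstar - a) : ℝ)) with hm_def
  have hrep : ∀ v : EuclideanSpace ℝ (Fin d), ‖v‖ < ε →
      distPotential A₁ A₂ lam (xstar + v) =
        distPotential A₁ A₂ lam xstar + ‖v‖ ^ 2 + m v := by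
    intro v hv
    have h1 := hrep₁ v (hv.trans_le ((min_le_right _ _).trans (min_le_left _ _)))
    have h2 := hrep₂ v (hv.trans_le ((min_le_right _ _).trans (min_le_right _ _)))
    simp only [distPotential, hm_def]
    rw [h1, h2]
    ring
  -- homogeneity of m
  have hhom : ∀ (t : ℝ), 0 ≤ t → ∀ v : EuclideanSpace ℝ (Fin d), m (t • v) = t * m v := by
    intro t ht v
    have key : ∀ (P : Finset (EuclideanSpace ℝ (Fin d))) (hP : P.Nonempty),
        P.inf' hP (fun a => 2 * (inner ℝ (t • v) (xstar - a) : ℝ)) =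
          t * P.inf' hP (fun a => 2 * (inner ℝ v (xstar - a) : ℝ)) := by
      intro P hP
      have h1 : ∀ a : EuclideanSpace ℝ (Fin d), 2 * (inner ℝ (t • v) (xstar - a) : ℝ) =
          t * (2 * (inner ℝ v (xstar - a) : ℝ)) := by
        intro a
        rw [real_inner_smul_left]
        ring
      rw [Finset.inf'_congr hP rfl (fun a _ => h1 a)]
      exact (mono_map_inf' P hP (g := fun s => t * s)
        (fun a b hab => mul_le_mul_of_nonneg_left hab ht) _).symm
    simp only [hm_def, key]
    ring
  -- m ≥ 0 from local minimality
  have hm0 : ∀ v : EuclideanSpace ℝ (Fin d), 0 ≤ m v := by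
    intro v
    rcases eq_or_ne v 0 with hv | hv
    · have : m 0 = 0 := by
        have := hhom 0 le_rfl 0
        simpa using this
      rw [hv, this]
    · by_contra h
      push_neg at h
      have hvn : 0 < ‖v‖ := norm_pos_iff.mpr hv
      set t : ℝ := min (ε / (2 * ‖v‖)) ((-m v) / (2 * ‖v‖ ^ 2)) with ht_def
      have ht1 : 0 < ε / (2 * ‖v‖) := by positivity
      have ht2 : 0 < (-m v) / (2 * ‖v‖ ^ 2) := by
        apply div_pos (by linarith) (by positivity)
      have ht : 0 < t := lt_min ht1 ht2
      have htv : ‖t • v‖ < ε := by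
        rw [norm_smul, Real.norm_eq_abs, abs_of_pos ht]
        calc t * ‖v‖ ≤ (ε / (2 * ‖v‖)) * ‖v‖ :=
              mul_le_mul_of_nonneg_right (min_le_left _ _) (norm_nonneg v)
          _ = ε / 2 := by field_simp
          _ < ε := by linarith
      have hdist : dist (xstar + t • v) xstar < ε₀ := by
        rw [dist_eq_norm]
        have : xstar + t • v - xstar = t • v := by abel
        rw [this]
        exact htv.trans_le (min_le_left _ _)
      have hmin' := hball hdist
      rw [hrep (t • v) htv] at hmin'
      have hnorm : ‖t • v‖ ^ 2 = t ^ 2 * ‖v‖ ^ 2 := by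
        rw [norm_smul, Real.norm_eq_abs, mul_pow, sq_abs]
      rw [hnorm, hhom t ht.le v] at hmin'
      -- 0 ≤ t²‖v‖² + t * m v
      have h1 : 0 ≤ t ^ 2 * ‖v‖ ^ 2 + t * m v := by linarith
      have h2 : -m v ≤ t * ‖v‖ ^ 2 := by
        have := mul_pos ht ht
        nlinarith
      have h3 : t * ‖v‖ ^ 2 ≤ (-m v) / 2 := by
        have : t ≤ (-m v) / (2 * ‖v‖ ^ 2) := min_le_right _ _
        calc t * ‖v‖ ^ 2 ≤ ((-m v) / (2 * ‖v‖ ^ 2)) * ‖v‖ ^ 2 :=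
              mul_le_mul_of_nonneg_right this (by positivity)
          _ = (-m v) / 2 := by field_simp
      have h4 : -m v ≤ -m v / 2 := le_trans h2 h3
      linarith
  -- m v + m (-v) ≤ 0
  have hm_add : ∀ v : EuclideanSpace ℝ (Fin d), m v + m (-v) ≤ 0 := by
    intro v
    obtain ⟨a₁, ha₁⟩ := hP₁
    obtain ⟨a₂, ha₂⟩ := hP₂
    have e11 : P₁.inf' ⟨a₁, ha₁⟩ (fun a => 2 * (inner ℝ v (xstar - a) : ℝ)) ≤
        2 * (inner ℝ v (xstar - a₁) : ℝ) := Finset.inf'_le _ ha₁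
    have e12 : P₁.inf' ⟨a₁, ha₁⟩ (fun a => 2 * (inner ℝ (-v) (xstar - a) : ℝ)) ≤
        2 * (inner ℝ (-v) (xstar - a₁) : ℝ) := Finset.inf'_le _ ha₁
    have e21 : P₂.inf' ⟨a₂, ha₂⟩ (fun a => 2 * (inner ℝ v (xstar - a) : ℝ)) ≤
        2 * (inner ℝ v (xstar - a₂) : ℝ) := Finset.inf'_le _ ha₂
    have e22 : P₂.inf' ⟨a₂, ha₂⟩ (fun a => 2 * (inner ℝ (-v) (xstar - a) : ℝ)) ≤
        2 * (inner ℝ (-v) (xstar - a₂) : ℝ) := Finset.inf'_le _ ha₂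
    have n1 : (inner ℝ (-v) (xstar - a₁) : ℝ) = -(inner ℝ v (xstar - a₁) : ℝ) := by
      rw [inner_neg_left]
    have n2 : (inner ℝ (-v) (xstar - a₂) : ℝ) = -(inner ℝ v (xstar - a₂) : ℝ) := by
      rw [inner_neg_left]
    rw [n1] at e12
    rw [n2] at e22
    simp only [hm_def]
    have hl : 0 ≤ 1 - lam := by linarith
    nlinarith [mul_le_mul_of_nonneg_left e11 hlam₀, mul_le_mul_of_nonneg_left e12 hlam₀,
      mul_le_mul_of_nonneg_left e21 hl, mul_le_mul_of_nonneg_left e22 hl]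
  have hmzero : ∀ v : EuclideanSpace ℝ (Fin d), m v = 0 := by
    intro v
    have h1 := hm0 v
    have h2 := hm0 (-v)
    have h3 := hm_add v
    linarith
  have heq : ∀ x ∈ Metric.ball xstar ε, distPotential A₁ A₂ lam x =
      distPotential A₁ A₂ lam xstar + ‖x - xstar‖ ^ 2 := by
    intro x hx
    have hv : ‖x - xstar‖ < ε := by rwa [Metric.mem_ball, dist_eq_norm] at hx
    have h := hrep (x - xstar) hv
    have hx' : xstar + (x - xstar) = x := by abel
    rw [hx', hmzero (x - xstar), add_zero] at h
    exact h
  refine ⟨Metric.ball xstar ε, Metric.isOpen_ball, Metric.mem_ball_self hεpos, heq, ?_⟩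
  intro x hx hne
  have h := heq x hx
  have hpos : 0 < ‖x - xstar‖ ^ 2 := by
    have h0 : x - xstar ≠ 0 := sub_ne_zero.mpr hne
    exact pow_pos (norm_pos_iff.mpr h0) 2
  linarith
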